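/- Conditional expectation formula for the confidence bound: Suppose the first m−1 measurement strings p_1^♯,…,p_{m−1}^♯ ∈ {X,Y,Z}^n and the first k coordinates p_m^♯[1],…,p_m^♯[k] of the m-th measurement are fixed, and all remaining entries of P ∈ {X,Y,Z}^{n×M} are i.i.d. uniform. Then E_P[Conf_ε(O;P) | P^♯] = ∑_{ℓ=1}^L exp(−(ε²/2) h(o_ℓ; [p_1^♯,…,p_{m−1}^♯])) · (1 − ν · ∏_{k'=1}^{k} 1{o_ℓ[k'] ▷ p_m^♯[k']} · 3^{−w_{¬k}(o_ℓ)}) · (1 − ν·3^{−w(o_ℓ)})^{M−m}, where ν = 1 − exp(−ε²/2) and w_{¬k}(o_ℓ) is the number of indices k' > k with o_ℓ[k'] ≠ I. -/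

import Mathlib

inductive Pauli | I | X | Y | Z
deriving DecidableEq

instance instFintypePauli : Fintype Pauli :=
  ⟨{Pauli.I, Pauli.X, Pauli.Y, Pauli.Z}, fun x => by cases x <;> simp⟩

inductive Axis | X | Y | Z
deriving DecidableEq

instance instFintypeAxis : Fintype Axis :=
  ⟨{Axis.X, Axis.Y, Axis.Z}, fun x => by cases x <;> simp⟩

def Axis.toPauli : Axis → Pauli
  | .X => .X
  | .Y => .Y
  | .Z => .Z

/-- single-qubit hitting relation: `o = I` or `o = p`. -/
def hit1 (o : Pauli) (p : Axis) : Prop := o = Pauli.I ∨ o = p.toPauli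

instance (o : Pauli) (p : Axis) : Decidable (hit1 o p) := by unfold hit1; infer_instance

/-- `o ▷ p`: every coordinate of `o` is `I` or matches `p`. -/
def hits {n : ℕ} (o : Fin n → Pauli) (p : Fin n → Axis) : Prop := ∀ k, hit1 (o k) (p k)

instance {n : ℕ} (o : Fin n → Pauli) (p : Fin n → Axis) : Decidable (hits o p) := by
  unfold hits; infer_instance

/-- weight: number of non-identity coordinates. -/
def weight {n : ℕ} (o : Fin n → Pauli) : ℕ :=
  (Finset.univ.filter (fun k => o k ≠ Pauli.I)).card

/-- hitting count of `o` among the measurements `P`. -/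
def hitCount {n M : ℕ} (o : Fin n → Pauli) (P : Fin M → Fin n → Axis) : ℕ :=
  (Finset.univ.filter (fun m => hits o (P m))).card

/-- the confidence bound. -/
noncomputable def Conf {n M L : ℕ} (ε : ℝ) (O : Fin L → Fin n → Pauli)
    (P : Fin M → Fin n → Axis) : ℝ :=
  ∑ ℓ, Real.exp (-(ε ^ 2 / 2) * (hitCount (O ℓ) P))


lemma ind_hits {n : ℕ} (o : Fin n → Pauli) (r : Fin n → Axis) :
    (if hits o r then (1:ℝ) else 0) = ∏ k', (if hit1 (o k') (r k') then (1:ℝ) else 0) := by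
  classical
  rw [Finset.prod_boole]
  by_cases h : hits o r
  · rw [if_pos h, if_pos (fun j _ => h j)]
  · rw [if_neg h, if_neg (fun hh => h (fun j => hh j (Finset.mem_univ j)))]

lemma axis_univ_eq : (Finset.univ : Finset Axis) = {Axis.X, Axis.Y, Axis.Z} := by decide

lemma sum_ind_univ (o : Pauli) :
    ∑ p : Axis, (if hit1 o p then (1:ℝ) else 0) = if o = Pauli.I then 3 else 1 := by
  rw [axis_univ_eq]
  cases o <;> simp [hit1, Axis.toPauli] <;> norm_num <;> decide

lemma axis_card : ((Finset.univ : Finset Axis).card) = 3 := by decide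

set_option maxHeartbeats 1000000 in
/-- conditional expectation formula for the confidence bound, given that
the first `m₀` measurements and the first `k` Pauli labels of measurement `m₀` are fixed
(to the values of `Q`), with all remaining labels i.i.d. uniform. -/
theorem stmt11 {n M L : ℕ} (ε : ℝ) (O : Fin L → Fin n → Pauli)
    (m₀ k : ℕ) (hm₀ : m₀ < M) (hk : k ≤ n)
    (Q : Fin M → Fin n → Axis) :
    (∑ P ∈ Finset.univ.filter (fun P : Fin M → Fin n → Axis =>
        ∀ (m' : Fin M) (k' : Fin n),
          ((m' : ℕ) < m₀ ∨ ((m' : ℕ) = m₀ ∧ (k' : ℕ) < k)) → P m' k' = Q m' k'), Conf ε O P)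
      / ((Finset.univ.filter (fun P : Fin M → Fin n → Axis =>
        ∀ (m' : Fin M) (k' : Fin n),
          ((m' : ℕ) < m₀ ∨ ((m' : ℕ) = m₀ ∧ (k' : ℕ) < k)) → P m' k' = Q m' k')).card : ℝ)
    = ∑ ℓ,
        Real.exp (-(ε ^ 2 / 2) *
          ((Finset.univ.filter (fun m' : Fin M =>
              (m' : ℕ) < m₀ ∧ hits (O ℓ) (Q m'))).card : ℝ))
        * (1 - (1 - Real.exp (-(ε ^ 2 / 2)))
            * (if ∀ k' : Fin n, (k' : ℕ) < k → hit1 (O ℓ k') (Q ⟨m₀, hm₀⟩ k')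
               then (1 : ℝ) else 0)
            / 3 ^ ((Finset.univ.filter (fun k' : Fin n =>
                k ≤ (k' : ℕ) ∧ O ℓ k' ≠ Pauli.I)).card))
        * (1 - (1 - Real.exp (-(ε ^ 2 / 2))) / 3 ^ weight (O ℓ)) ^ (M - (m₀ + 1)) := by
  classical
  set c : ℝ := ε ^ 2 / 2 with hc
  set e : ℝ := Real.exp (-c) with he
  set ν : ℝ := 1 - e with hν
  set T : Fin M → Fin n → Finset Axis := fun m' k' =>
    if ((m' : ℕ) < m₀ ∨ ((m' : ℕ) = m₀ ∧ (k' : ℕ) < k)) then {Q m' k'} else Finset.univ with hT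
  have hTcardne : ∀ (m' : Fin M) (k' : Fin n), ((T m' k').card : ℝ) ≠ 0 := by
    intro m' k'
    simp only [hT]
    split
    · simp
    · rw [axis_card]; norm_num
  have hfilter : (Finset.univ.filter (fun P : Fin M → Fin n → Axis =>
        ∀ (m' : Fin M) (k' : Fin n),
          ((m' : ℕ) < m₀ ∨ ((m' : ℕ) = m₀ ∧ (k' : ℕ) < k)) → P m' k' = Q m' k'))
      = Fintype.piFinset (fun m' => Fintype.piFinset (T m')) := by
    ext P
    simp only [Finset.mem_filter, Finset.mem_univ, true_and, Fintype.mem_piFinset, hT]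
    constructor
    · intro h m' k'
      by_cases hf : ((m' : ℕ) < m₀ ∨ ((m' : ℕ) = m₀ ∧ (k' : ℕ) < k))
      · rw [if_pos hf, Finset.mem_singleton]; exact h m' k' hf
      · rw [if_neg hf]; exact Finset.mem_univ _
    · intro h m' k' hf
      have h2 := h m' k'
      rw [if_pos hf, Finset.mem_singleton] at h2
      exact h2
  rw [hfilter]
  have hcard : (((Fintype.piFinset (fun m' => Fintype.piFinset (T m'))).card : ℝ))
      = ∏ m', ∏ k', ((T m' k').card : ℝ) := by
    rw [Fintype.card_piFinset]
    push_cast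
    refine Finset.prod_congr rfl (fun m' _ => ?_)
    rw [Fintype.card_piFinset]
    push_cast
    rfl
  have hconf : ∀ P : Fin M → Fin n → Axis, Conf ε O P
      = ∑ ℓ, ∏ m', (if hits (O ℓ) (P m') then e else 1) := by
    intro P
    unfold Conf hitCount
    refine Finset.sum_congr rfl (fun ℓ _ => ?_)
    have h3 : (-(ε ^ 2 / 2) * ((Finset.univ.filter (fun m => hits (O ℓ) (P m))).card : ℝ))
        = ((Finset.univ.filter (fun m => hits (O ℓ) (P m))).card : ℕ) * (-c) := by
      rw [hc]; push_cast; ring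
    rw [h3, Real.exp_nat_mul, ← he, ← Finset.prod_const, Finset.prod_filter]
  have key : ∑ P ∈ Fintype.piFinset (fun m' => Fintype.piFinset (T m')), Conf ε O P
      = ∑ ℓ, ∏ m', ∑ r ∈ Fintype.piFinset (T m'), (if hits (O ℓ) r then e else 1) := by
    simp_rw [hconf]
    rw [Finset.sum_comm]
    exact Finset.sum_congr rfl (fun ℓ _ =>
      (Finset.prod_univ_sum (fun m' => Fintype.piFinset (T m'))
        (fun m' r => if hits (O ℓ) r then e else 1)).symm)
  rw [key, hcard, Finset.sum_div]
  refine Finset.sum_congr rfl (fun ℓ _ => ?_)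
  -- row sums
  have hrow : ∀ m' : Fin M,
      ∑ r ∈ Fintype.piFinset (T m'), (if hits (O ℓ) r then e else 1)
      = (∏ k', ((T m' k').card : ℝ))
        - ν * ∏ k', ∑ p ∈ T m' k', (if hit1 (O ℓ k') p then (1:ℝ) else 0) := by
    intro m'
    have h1 : ∀ r : Fin n → Axis, (if hits (O ℓ) r then e else 1)
        = 1 - ν * ∏ k', (if hit1 (O ℓ k') (r k') then (1:ℝ) else 0) := by
      intro r
      rw [← ind_hits]
      by_cases h : hits (O ℓ) r
      · rw [if_pos h, if_pos h, hν]; ring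
      · rw [if_neg h, if_neg h]; ring
    simp_rw [h1]
    rw [Finset.sum_sub_distrib, Finset.sum_const, ← Finset.mul_sum,
      ← Finset.prod_univ_sum (T m') (fun k' p => if hit1 (O ℓ k') p then (1:ℝ) else 0),
      Fintype.card_piFinset, nsmul_eq_mul]
    push_cast
    ring
  simp_rw [hrow]
  -- the per-coordinate averages
  set A : Fin M → Fin n → ℝ := fun m' k' =>
    if ((m' : ℕ) < m₀ ∨ ((m' : ℕ) = m₀ ∧ (k' : ℕ) < k))
    then (if hit1 (O ℓ k') (Q m' k') then (1:ℝ) else 0)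
    else (if O ℓ k' = Pauli.I then 1 else 1/3) with hA
  have ha : ∀ (m' : Fin M) (k' : Fin n),
      (∑ p ∈ T m' k', (if hit1 (O ℓ k') p then (1:ℝ) else 0)) / ((T m' k').card : ℝ)
      = A m' k' := by
    intro m' k'
    simp only [hT, hA]
    by_cases hf : ((m' : ℕ) < m₀ ∨ ((m' : ℕ) = m₀ ∧ (k' : ℕ) < k))
    · rw [if_pos hf, if_pos hf, Finset.sum_singleton, Finset.card_singleton,
        Nat.cast_one, div_one]
    · rw [if_neg hf, if_neg hf, sum_ind_univ, axis_card]
      by_cases hI : O ℓ k' = Pauli.I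
      · rw [if_pos hI, if_pos hI]; norm_num
      · rw [if_neg hI, if_neg hI]; norm_num
  have hfac : (∏ m', ((∏ k', ((T m' k').card : ℝ))
        - ν * ∏ k', ∑ p ∈ T m' k', (if hit1 (O ℓ k') p then (1:ℝ) else 0)))
      / (∏ m', ∏ k', ((T m' k').card : ℝ))
      = ∏ m', (1 - ν * ∏ k', A m' k') := by
    rw [← Finset.prod_div_distrib]
    refine Finset.prod_congr rfl (fun m' _ => ?_)
    have hC : (∏ k', ((T m' k').card : ℝ)) ≠ 0 :=
      Finset.prod_ne_zero_iff.mpr (fun k' _ => hTcardne m' k')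
    rw [sub_div, div_self hC, mul_div_assoc, ← Finset.prod_div_distrib]
    congr 1
    congr 1
    exact Finset.prod_congr rfl (fun k' _ => ha m' k')
  rw [hfac]
  -- split the product over m' into three parts
  rw [← Finset.prod_filter_mul_prod_filter_not Finset.univ (fun m' : Fin M => (m' : ℕ) < m₀)]
  rw [← Finset.prod_filter_mul_prod_filter_not
    (Finset.univ.filter (fun m' : Fin M => ¬ (m' : ℕ) < m₀)) (fun m' : Fin M => (m' : ℕ) = m₀)]
  -- part 1
  have h1 : ∏ m' ∈ Finset.univ.filter (fun m' : Fin M => (m' : ℕ) < m₀),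
        (1 - ν * ∏ k', A m' k')
      = Real.exp (-c * ((Finset.univ.filter (fun m' : Fin M =>
          (m' : ℕ) < m₀ ∧ hits (O ℓ) (Q m'))).card : ℝ)) := by
    have hA1 : ∀ m' ∈ Finset.univ.filter (fun m' : Fin M => (m' : ℕ) < m₀),
        (1 - ν * ∏ k', A m' k') = if hits (O ℓ) (Q m') then e else 1 := by
      intro m' hm'
      rw [Finset.mem_filter] at hm'
      have hAk : ∀ k' : Fin n, A m' k' = if hit1 (O ℓ k') (Q m' k') then (1:ℝ) else 0 := by
        intro k'; simp only [hA]; exact if_pos (Or.inl hm'.2)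
      rw [Finset.prod_congr rfl (fun k' _ => hAk k'), Finset.prod_boole]
      by_cases h : hits (O ℓ) (Q m')
      · rw [if_pos (fun i (_ : i ∈ Finset.univ) => h i), if_pos h, hν]; ring
      · rw [if_neg (fun hh => h (fun i => hh i (Finset.mem_univ i))), if_neg h]; ring
    rw [Finset.prod_congr rfl hA1, Finset.prod_ite (fun _ => e) (fun _ => (1:ℝ)),
      Finset.prod_const_one, mul_one, Finset.prod_const, Finset.filter_filter]
    have h4 : (-c * (((Finset.univ.filter (fun m' : Fin M =>
          (m' : ℕ) < m₀ ∧ hits (O ℓ) (Q m'))).card : ℕ) : ℝ))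
        = ((Finset.univ.filter (fun m' : Fin M =>
          (m' : ℕ) < m₀ ∧ hits (O ℓ) (Q m'))).card : ℕ) * (-c) := by ring
    rw [h4, Real.exp_nat_mul, ← he]
  -- part 2 : the singleton m₀
  have hsing : (Finset.univ.filter (fun m' : Fin M => ¬ (m' : ℕ) < m₀)).filter
        (fun m' : Fin M => (m' : ℕ) = m₀) = {(⟨m₀, hm₀⟩ : Fin M)} := by
    ext m'
    simp only [Finset.mem_filter, Finset.mem_univ, true_and, Finset.mem_singleton, Fin.ext_iff]
    omega
  have h2 : ∏ m' ∈ (Finset.univ.filter (fun m' : Fin M => ¬ (m' : ℕ) < m₀)).filter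
        (fun m' : Fin M => (m' : ℕ) = m₀), (1 - ν * ∏ k', A m' k')
      = 1 - ν * (if ∀ k' : Fin n, (k' : ℕ) < k → hit1 (O ℓ k') (Q ⟨m₀, hm₀⟩ k')
               then (1 : ℝ) else 0)
            / 3 ^ ((Finset.univ.filter (fun k' : Fin n =>
                k ≤ (k' : ℕ) ∧ O ℓ k' ≠ Pauli.I)).card) := by
    rw [hsing, Finset.prod_singleton]
    have hAk : ∀ k' : Fin n, A ⟨m₀, hm₀⟩ k'
        = if (k' : ℕ) < k then (if hit1 (O ℓ k') (Q ⟨m₀, hm₀⟩ k') then (1:ℝ) else 0)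
          else (if O ℓ k' = Pauli.I then 1 else 1/3) := by
      intro k'
      simp only [hA]
      by_cases hkk : (k' : ℕ) < k
      · simp [hkk]
      · simp [hkk]
    rw [Finset.prod_congr rfl (fun k' _ => hAk k'),
      Finset.prod_ite (fun k' => if hit1 (O ℓ k') (Q ⟨m₀, hm₀⟩ k') then (1:ℝ) else 0)
        (fun k' => if O ℓ k' = Pauli.I then (1:ℝ) else 1/3),
      Finset.prod_boole]
    have hsnd : ∏ k' ∈ Finset.univ.filter (fun k' : Fin n => ¬ (k' : ℕ) < k),
          (if O ℓ k' = Pauli.I then (1:ℝ) else 1/3)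
        = (1/3 : ℝ) ^ ((Finset.univ.filter (fun k' : Fin n =>
            k ≤ (k' : ℕ) ∧ O ℓ k' ≠ Pauli.I)).card) := by
      rw [Finset.prod_ite (fun _ => (1:ℝ)) (fun _ => (1/3 : ℝ)), Finset.prod_const_one,
        one_mul, Finset.prod_const, Finset.filter_filter]
      have hseteq : (Finset.univ.filter (fun k' : Fin n =>
            ¬ (k' : ℕ) < k ∧ ¬ O ℓ k' = Pauli.I))
          = Finset.univ.filter (fun k' : Fin n => k ≤ (k' : ℕ) ∧ O ℓ k' ≠ Pauli.I) := by
        ext k'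
        simp [not_lt]
      rw [hseteq]
    rw [hsnd]
    by_cases h : ∀ k' : Fin n, (k' : ℕ) < k → hit1 (O ℓ k') (Q ⟨m₀, hm₀⟩ k')
    · have hfilt : ∀ k' ∈ Finset.univ.filter (fun k' : Fin n => (k' : ℕ) < k),
          hit1 (O ℓ k') (Q ⟨m₀, hm₀⟩ k') :=
        fun k' hk' => h k' (Finset.mem_filter.mp hk').2
      rw [if_pos hfilt, if_pos h, one_div, inv_pow]
      ring
    · have hfilt : ¬ ∀ k' ∈ Finset.univ.filter (fun k' : Fin n => (k' : ℕ) < k),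
          hit1 (O ℓ k') (Q ⟨m₀, hm₀⟩ k') :=
        fun hh => h (fun k' hkk => hh k' (Finset.mem_filter.mpr ⟨Finset.mem_univ _, hkk⟩))
      rw [if_neg hfilt, if_neg h]
      ring
  -- part 3
  have hset3 : (Finset.univ.filter (fun m' : Fin M => ¬ (m' : ℕ) < m₀)).filter
        (fun m' : Fin M => ¬ (m' : ℕ) = m₀) = Finset.Ioi (⟨m₀, hm₀⟩ : Fin M) := by
    ext m'
    simp only [Finset.mem_filter, Finset.mem_univ, true_and, Finset.mem_Ioi, Fin.lt_def]
    omega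
  have h3 : ∏ m' ∈ (Finset.univ.filter (fun m' : Fin M => ¬ (m' : ℕ) < m₀)).filter
        (fun m' : Fin M => ¬ (m' : ℕ) = m₀), (1 - ν * ∏ k', A m' k')
      = (1 - ν / 3 ^ weight (O ℓ)) ^ (M - (m₀ + 1)) := by
    have hA3 : ∀ m' ∈ (Finset.univ.filter (fun m' : Fin M => ¬ (m' : ℕ) < m₀)).filter
          (fun m' : Fin M => ¬ (m' : ℕ) = m₀),
        (1 - ν * ∏ k', A m' k') = 1 - ν / 3 ^ weight (O ℓ) := by
      intro m' hm'
      simp only [Finset.mem_filter, Finset.mem_univ, true_and] at hm'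
      have hAk : ∀ k' : Fin n, A m' k' = if O ℓ k' = Pauli.I then (1:ℝ) else 1/3 := by
        intro k'
        simp only [hA]
        have h1 := hm'.1
        have h2 := hm'.2
        exact if_neg (by omega)
      rw [Finset.prod_congr rfl (fun k' _ => hAk k'),
        Finset.prod_ite (fun _ => (1:ℝ)) (fun _ => (1/3 : ℝ)), Finset.prod_const_one,
        one_mul, Finset.prod_const]
      have hw : (Finset.univ.filter (fun k' : Fin n => ¬ O ℓ k' = Pauli.I)).card
          = weight (O ℓ) := rfl
      rw [hw, one_div, inv_pow, div_eq_mul_inv]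
    rw [Finset.prod_congr rfl hA3, Finset.prod_const, hset3, Fin.card_Ioi]
    congr 1
    simp only [Fin.val_mk]
    omega
  rw [h1, h2, h3]
  ring
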